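/- (Nicholson's equation with p ≤ d: the origin is a global attractor.) Let d ≥ p > 0 and τ > 0, and let x : [−τ,∞) → [0,∞) be a continuous function, differentiable on (0,∞), satisfying x'(t) = −d·x(t) + p·x(t−τ)·e^{−x(t−τ)} for all t > 0. Then x(t) → 0 as t → +∞. -/

import Mathlib

open Filter Set

lemma nich_g_le {z : ℝ} (hz : 0 ≤ z) : z * Real.exp (-z) ≤ Real.exp (-1) := by
  have h := Real.add_one_le_exp (z - 1)
  have h2 : z * Real.exp (-z) ≤ Real.exp (z - 1) * Real.exp (-z) := by
    nlinarith [Real.exp_pos (-z)]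
  calc z * Real.exp (-z) ≤ Real.exp (z - 1) * Real.exp (-z) := h2
    _ = Real.exp (-1) := by rw [← Real.exp_add]; ring_nf

lemma nich_g_mono {z w : ℝ} (hz : 0 ≤ z) (hzw : z ≤ w) (hw : w ≤ 1) :
    z * Real.exp (-z) ≤ w * Real.exp (-w) := by
  have h := Real.add_one_le_exp (z - w)
  have h2 : z ≤ w * Real.exp (z - w) := by nlinarith
  calc z * Real.exp (-z) ≤ (w * Real.exp (z - w)) * Real.exp (-z) := by
        nlinarith [Real.exp_pos (-z)]
    _ = w * Real.exp (-w) := by rw [mul_assoc, ← Real.exp_add]; ring_nf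

lemma nich_g_max {M z : ℝ} (hz : 0 ≤ z) (hzM : z ≤ M) :
    z * Real.exp (-z) ≤ min M 1 * Real.exp (-(min M 1)) := by
  rcases le_or_gt z (min M 1) with h | h
  · exact nich_g_mono hz h (min_le_right _ _)
  · have hm : min M 1 = 1 := by
      rcases min_cases M 1 with ⟨he, _⟩ | ⟨he, _⟩
      · exfalso; rw [he] at h; linarith
      · exact he
    rw [hm]
    simpa using nich_g_le hz

/-- Barrier lemma: if `f a ≤ K` and the derivative is nonpositive whenever `f ≥ K`,
then `f ≤ K` on `[a, ∞)`. -/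
lemma nich_barrier {f f' : ℝ → ℝ} {a K : ℝ}
    (hc : ContinuousOn f (Ici a))
    (hd : ∀ t, a < t → HasDerivAt f (f' t) t)
    (h0 : f a ≤ K)
    (hK : ∀ t, a < t → K ≤ f t → f' t ≤ 0) :
    ∀ t, a ≤ t → f t ≤ K := by
  intro t1 ht1
  by_contra hgt
  push_neg at hgt
  set S : Set ℝ := Icc a t1 ∩ f ⁻¹' (Iic K) with hS
  have hclosed : IsClosed S :=
    (hc.mono (Icc_subset_Ici_self)).preimage_isClosed_of_isClosed isClosed_Icc isClosed_Iic
  have hne : S.Nonempty := ⟨a, ⟨le_refl a, ht1⟩, h0⟩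
  have hbdd : BddAbove S := ⟨t1, fun u hu => hu.1.2⟩
  set s := sSup S with hs
  have hsS : s ∈ S := hclosed.csSup_mem hne hbdd
  have hsa : a ≤ s := hsS.1.1
  have hst1 : s ≤ t1 := hsS.1.2
  have hfs : f s ≤ K := hsS.2
  have hslt : s < t1 := lt_of_le_of_ne hst1 (fun h => by rw [h] at hfs; linarith)
  have hgtK : ∀ u, s < u → u ≤ t1 → K < f u := by
    intro u hsu hut1
    by_contra hle
    push_neg at hle
    have : u ∈ S := ⟨⟨le_trans hsa hsu.le, hut1⟩, hle⟩
    exact absurd (le_csSup hbdd this) (not_le.2 hsu)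
  have hanti : AntitoneOn f (Icc s t1) := by
    apply antitoneOn_of_deriv_nonpos (convex_Icc s t1)
    · exact hc.mono (fun u hu => le_trans hsa hu.1)
    · intro u hu
      rw [interior_Icc] at hu
      exact ((hd u (lt_of_le_of_lt hsa hu.1)).differentiableAt).differentiableWithinAt
    · intro u hu
      rw [interior_Icc] at hu
      have hau : a < u := lt_of_le_of_lt hsa hu.1
      rw [(hd u hau).deriv]
      exact hK u hau (hgtK u hu.1 hu.2.le).le
  have := hanti ⟨le_refl s, hslt.le⟩ ⟨hslt.le, le_refl t1⟩ hslt.le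
  linarith

/-- Nicholson's equation with p ≤ d: the origin is a global attractor
of the nonnegative solutions. -/
theorem nicholson_zero_global_attractor
    (d p τ : ℝ) (hp : 0 < p) (hpd : p ≤ d) (hτ : 0 < τ)
    (x : ℝ → ℝ)
    (hxc : ContinuousOn x (Ici (-τ)))
    (hxnn : ∀ t, -τ ≤ t → 0 ≤ x t)
    (hxde : ∀ t, 0 < t →
      HasDerivAt x (-d * x t + p * x (t - τ) * Real.exp (-(x (t - τ)))) t) :
    Tendsto x atTop (nhds 0) := by
  have hd0 : 0 < d := lt_of_lt_of_le hp hpd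
  set F : ℝ → ℝ := fun t => -d * x t + p * x (t - τ) * Real.exp (-(x (t - τ))) with hFdef
  have hF : ∀ t, 0 < t → HasDerivAt x (F t) t := hxde
  clear_value F
  have hxc0 : ContinuousOn x (Ici 0) := hxc.mono (fun u hu => by
    simp only [mem_Ici] at *; linarith)
  have hnn : ∀ t, 0 ≤ t → 0 ≤ x t := fun t ht => hxnn t (by linarith)
  have hnnτ : ∀ t, 0 ≤ t → 0 ≤ x (t - τ) := fun t ht => hxnn (t - τ) (by linarith)
  -- Step 1: boundedness
  set K₀ := max (x 0) (p / (d * Real.exp 1)) with hK₀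
  have hbound : ∀ t, 0 ≤ t → x t ≤ K₀ := by
    apply nich_barrier hxc0 hF (le_max_left _ _)
    intro t ht hxt
    simp only [hFdef]
    have hg : x (t - τ) * Real.exp (-(x (t - τ))) ≤ Real.exp (-1) := nich_g_le (hnnτ t ht.le)
    have h1 : p / (d * Real.exp 1) ≤ x t := le_trans (le_max_right _ _) hxt
    have hA : p * (x (t - τ) * Real.exp (-(x (t - τ)))) ≤ p * Real.exp (-1) :=
      mul_le_mul_of_nonneg_left hg hp.le
    have hB : p * Real.exp (-1) = d * (p / (d * Real.exp 1)) := by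
      rw [Real.exp_neg]
      field_simp
    have hC : d * (p / (d * Real.exp 1)) ≤ d * x t := mul_le_mul_of_nonneg_left h1 hd0.le
    nlinarith
  have hBdd : IsBoundedUnder (· ≤ ·) atTop x :=
    ⟨K₀, eventually_map.2 (by
      filter_upwards [eventually_ge_atTop (0:ℝ)] with t ht using hbound t ht)⟩
  have hCo : IsCoboundedUnder (· ≤ ·) atTop x :=
    isCoboundedUnder_le_of_eventually_le atTop (x := 0) (by
      filter_upwards [eventually_ge_atTop (0:ℝ)] with t ht using hnn t ht)
  set L := limsup x atTop with hL
  clear_value L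
  -- Step 2: the limsup cannot be positive
  have hLnp : ¬ 0 < L := by
    intro hLp
    obtain ⟨ε, hε, hclt⟩ :
        ∃ ε > 0, p * (min (L + ε) 1 * Real.exp (-(min (L + ε) 1))) < d * L := by
      rcases le_or_gt 1 L with h1 | h1
      · refine ⟨1, one_pos, ?_⟩
        have hm : min (L + 1) 1 = 1 := min_eq_right (by linarith)
        rw [hm]
        have he1 : Real.exp (-(1:ℝ)) < 1 := Real.exp_lt_one_iff.2 (by norm_num)
        have he0 : 0 < Real.exp (-(1:ℝ)) := Real.exp_pos _
        nlinarith
      · have hE : 1 < Real.exp L := Real.one_lt_exp_iff.2 hLp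
        refine ⟨min ((1 - L) / 2) (L * (Real.exp L - 1) / 2), ?_, ?_⟩
        · apply lt_min
          · linarith
          · nlinarith
        · set ε := min ((1 - L) / 2) (L * (Real.exp L - 1) / 2) with hεdef
          have hε1 : ε ≤ (1 - L) / 2 := min_le_left _ _
          have hε2 : ε ≤ L * (Real.exp L - 1) / 2 := min_le_right _ _
          have hεpos : 0 < ε := lt_min (by linarith) (by nlinarith)
          have hm : min (L + ε) 1 = L + ε := min_eq_left (by linarith)
          rw [hm]
          have h2 : Real.exp (-(L + ε)) ≤ Real.exp (-L) := Real.exp_le_exp.2 (by linarith)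
          have hEE : Real.exp (-L) * Real.exp L = 1 := by
            rw [← Real.exp_add]; simp
          have hkey : L + ε < L * Real.exp L := by nlinarith
          have h3 : (L + ε) * Real.exp (-L) < L := by
            nlinarith [Real.exp_pos (-L), mul_pos (Real.exp_pos (-L)) (sub_pos.2 hkey)]
          have h4 : (L + ε) * Real.exp (-(L + ε)) ≤ (L + ε) * Real.exp (-L) :=
            mul_le_mul_of_nonneg_left h2 (by linarith)
          nlinarith
    set m := min (L + ε) 1 with hm
    have hm0 : 0 ≤ m := by rw [hm]; exact le_min (by linarith) zero_le_one
    clear_value m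
    set c := d * L - p * (m * Real.exp (-m)) with hc
    have hcpos : 0 < c := by rw [hc]; linarith
    clear_value c
    set η := min ε (c / (2 * d)) with hη
    have hηpos : 0 < η := by rw [hη]; exact lt_min hε (by positivity)
    have hηc : η ≤ c / (2 * d) := by rw [hη]; exact min_le_right _ _
    clear_value η
    have hηc2 : d * η ≤ c / 2 := by
      rw [le_div_iff₀ (by positivity : (0:ℝ) < 2 * d)] at hηc
      linarith
    -- eventually x < L + ε
    obtain ⟨T₁, hT₁⟩ := eventually_atTop.1
      (eventually_lt_of_limsup_lt (by rw [← hL]; linarith : limsup x atTop < L + ε) hBdd)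
    set T := max (T₁ + τ) 0 with hT
    have hT0 : (0:ℝ) ≤ T := le_max_right _ _
    have hTτ : T₁ + τ ≤ T := le_max_left _ _
    clear_value T
    have hdec : ∀ t, T ≤ t → L - η ≤ x t → F t ≤ -(c / 2) := by
      intro t ht hxt
      have htτ : T₁ ≤ t - τ := by
        have := le_trans hTτ ht; linarith
      have h1 : x (t - τ) < L + ε := hT₁ _ htτ
      have h0t : (0:ℝ) ≤ t := le_trans hT0 ht
      have h2 : 0 ≤ x (t - τ) := hnnτ t h0t
      have h3 : x (t - τ) * Real.exp (-(x (t - τ))) ≤ m * Real.exp (-m) := by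
        rw [hm]; exact nich_g_max h2 h1.le
      have hA : p * (x (t - τ) * Real.exp (-(x (t - τ)))) ≤ p * (m * Real.exp (-m)) :=
        mul_le_mul_of_nonneg_left h3 hp.le
      have hB : d * (L - η) ≤ d * x t := mul_le_mul_of_nonneg_left hxt hd0.le
      simp only [hFdef]
      nlinarith
    -- there is an entry point below L - η
    have hex : ∃ t0, T ≤ t0 ∧ x t0 ≤ L - η := by
      by_contra h
      push_neg at h
      set T' := T + (x T + 1) / (c / 2) with hT'
      have hxT0 : 0 ≤ x T := hnn T hT0
      have hTT' : T < T' := by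
        rw [hT']
        have : 0 < (x T + 1) / (c / 2) := by positivity
        linarith
      have hexp : c / 2 * T' = c / 2 * T + (x T + 1) := by
        rw [hT']
        field_simp
      clear_value T'
      have hanti : AntitoneOn (fun t => x t + c / 2 * t) (Icc T T') := by
        apply antitoneOn_of_deriv_nonpos (convex_Icc _ _)
        · exact ContinuousOn.add
            (hxc0.mono (fun u hu => le_trans hT0 hu.1))
            (continuous_const.mul continuous_id).continuousOn
        · intro u hu
          rw [interior_Icc] at hu
          have h0u : 0 < u := lt_of_le_of_lt hT0 hu.1
          have hca : HasDerivAt (fun t : ℝ => c / 2 * t) (c / 2) u := by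
            simpa using (hasDerivAt_id u).const_mul (c / 2)
          exact ((hF u h0u).add hca).differentiableAt.differentiableWithinAt
        · intro u hu
          rw [interior_Icc] at hu
          have h0u : 0 < u := lt_of_le_of_lt hT0 hu.1
          have hca : HasDerivAt (fun t : ℝ => c / 2 * t) (c / 2) u := by
            simpa using (hasDerivAt_id u).const_mul (c / 2)
          rw [(show HasDerivAt (fun t => x t + c / 2 * t) (F u + c / 2) u from (hF u h0u).add hca).deriv]
          have := hdec u hu.1.le (h u hu.1.le).le
          linarith
      have heval := hanti (left_mem_Icc.2 hTT'.le) (right_mem_Icc.2 hTT'.le) hTT'.le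
      simp only at heval
      have hxT' : 0 ≤ x T' := hnn T' (le_trans hT0 hTT'.le)
      linarith
    obtain ⟨t0, ht0T, ht0⟩ := hex
    have ht00 : (0:ℝ) ≤ t0 := le_trans hT0 ht0T
    have hfin : ∀ t, t0 ≤ t → x t ≤ L - η := by
      apply nich_barrier (hxc0.mono (fun u hu => le_trans ht00 hu))
        (fun t ht => hF t (lt_of_le_of_lt ht00 ht)) ht0
      intro t ht hxt
      have := hdec t (le_trans ht0T ht.le) hxt
      linarith
    have hlim : L ≤ L - η := hL.le.trans (limsup_le_of_le hCo (by
      filter_upwards [eventually_ge_atTop t0] with t ht using hfin t ht))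
    linarith
  push_neg at hLnp
  -- Step 3: conclude
  rw [tendsto_order]
  constructor
  · intro a ha
    filter_upwards [eventually_ge_atTop (0:ℝ)] with t ht
    have := hnn t ht; linarith
  · intro b hb
    exact eventually_lt_of_limsup_lt (by rw [← hL]; exact lt_of_le_of_lt hLnp hb) hBdd
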